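/- There is no odd perfect number of the form n = 5^α · M^(2β), where α and β are positive integers, M is a squarefree positive integer, and 5 does not divide M. -/

import Mathlib

private def sig (n : ℕ) : ℕ := ArithmeticFunction.sigma 1 n

private lemma geom_nat (q e : ℕ) :
    q * (∑ i ∈ Finset.range (e+1), (q+1)^i) + 1 = (q+1)^(e+1) := by
  induction e with
  | zero => simp
  | succ e ih =>
    rw [Finset.sum_range_succ, Nat.mul_add, pow_succ (q+1) (e+1)]
    nlinarith [ih]

private lemma sig_pp {p : ℕ} (hp : p.Prime) (e : ℕ) :
    sig (p^e) = ∑ i ∈ Finset.range (e+1), p^i := by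
  rw [sig, ArithmeticFunction.sigma_one_apply, Nat.sum_divisors_prime_pow hp]

private lemma sig_geom (q e : ℕ) (hp : (q+1).Prime) :
    q * sig ((q+1)^e) + 1 = (q+1)^(e+1) := by
  rw [sig_pp hp]; exact geom_nat q e

private lemma sig_ge {m : ℕ} (hm : m ≠ 0) : m ≤ sig m := by
  rw [sig, ArithmeticFunction.sigma_one_apply]
  exact Finset.single_le_sum (f := fun d => d) (fun i _ => Nat.zero_le i)
    (Nat.mem_divisors_self m hm)

private lemma sig_pp_cast {p : ℕ} (hp : p.Prime) (e m : ℕ) :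
    ((sig (p^e) : ℕ) : ZMod m) = ∑ i ∈ Finset.range (e+1), (p : ZMod m)^i := by
  rw [sig_pp hp e]
  push_cast
  rfl

private lemma sig_cast_of_one {p m : ℕ} (hp : p.Prime) (h1 : (p : ZMod m) = 1) (e : ℕ) :
    ((sig (p^e) : ℕ) : ZMod m) = ((e+1 : ℕ) : ZMod m) := by
  rw [sig_pp_cast hp, h1]
  simp

private lemma sig_mod2 {q : ℕ} (hq : q.Prime) (h2 : ¬ 2 ∣ q) (e : ℕ) :
    (2 ∣ sig (q^e)) ↔ (2 ∣ (e+1)) := by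
  have h1 : (q : ZMod 2) = 1 := by
    have : q % 2 = 1 := by omega
    rw [← ZMod.natCast_mod, this]
    norm_num
  rw [← ZMod.natCast_eq_zero_iff, ← ZMod.natCast_eq_zero_iff,
    sig_cast_of_one hq h1]

set_option maxHeartbeats 4000000 in
theorem no_odd_perfect_five_sqfree :
    ¬ ∃ (n M α β : ℕ),
      0 < α ∧ 0 < β ∧ 0 < M ∧ Squarefree M ∧ ¬ (5 ∣ M) ∧
      n = 5 ^ α * M ^ (2 * β) ∧ Odd n ∧ Nat.Perfect n := by
  rintro ⟨n, M, α, β, hα, hβ, hM, hsq, h5M, hn, hodd, hperf⟩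
  have hn2 : ¬ (2 ∣ n) := by rw [Nat.odd_iff] at hodd; omega
  have hM2 : ¬ (2 ∣ M) := by
    intro h
    exact hn2 (hn ▸ Dvd.dvd.mul_left (h.trans (dvd_pow_self M (by omega))) _)
  have hMne : M ≠ 0 := hM.ne'
  have hσn : sig n = 2 * n := by
    simpa [sig, ArithmeticFunction.sigma_one_apply] using
      (Nat.perfect_iff_sum_divisors_eq_two_mul hperf.2).mp hperf
  set P := M.primeFactors with hP
  have hMprod : ∏ q ∈ P, q = M := Nat.prod_primeFactors_of_squarefree hsq
  have hPmem : ∀ q ∈ P, q.Prime ∧ q ∣ M := by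
    intro q hq
    have := Nat.mem_primeFactors.mp hq
    exact ⟨this.1, this.2.1⟩
  have hcop5M : Nat.Coprime 5 M :=
    (Nat.Prime.coprime_iff_not_dvd (by norm_num)).mpr h5M
  -- main factorization of sigma
  have hmain : sig (5^α) * ∏ q ∈ P, sig (q^(2*β)) = 2 * n := by
    have h1 : sig n = sig (5^α) * sig (M^(2*β)) := by
      rw [hn, sig, sig, sig]
      exact ArithmeticFunction.isMultiplicative_sigma.map_mul_of_coprime (hcop5M.pow _ _)
    have h2 : sig (M^(2*β)) = ∏ q ∈ P, sig (q^(2*β)) := by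
      have hMp : M^(2*β) = ∏ q ∈ P, q^(2*β) := by rw [← hMprod, Finset.prod_pow]
      rw [hMp, sig]
      simp only [sig]
      exact ArithmeticFunction.IsMultiplicative.map_prod _
        ArithmeticFunction.isMultiplicative_sigma P
        (fun x hx y hy hxy =>
          show Nat.Coprime (x^(2*β)) (y^(2*β)) from
            (((Nat.coprime_primes (hPmem x hx).1 (hPmem y hy).1).mpr hxy)).pow _ _)
    rw [← h2, ← h1, hσn]
  -- all factors over P are odd
  have hfodd : ∀ q ∈ P, ¬ 2 ∣ sig (q^(2*β)) := by
    intro q hq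
    obtain ⟨hqp, hqM⟩ := hPmem q hq
    have hq2 : ¬ 2 ∣ q := fun h =>
      hM2 (((Nat.prime_dvd_prime_iff_eq Nat.prime_two hqp).mp h) ▸ hqM)
    rw [sig_mod2 hqp hq2]
    omega
  have hTodd : ¬ 2 ∣ ∏ q ∈ P, sig (q^(2*β)) := by
    intro h
    obtain ⟨q, hq, hdq⟩ := (Nat.prime_iff.mp Nat.prime_two).exists_mem_finset_dvd h
    exact hfodd q hq hdq
  -- α is odd
  have hαodd : 2 ∣ (α + 1) := by
    have h2A : 2 ∣ sig (5^α) := by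
      rcases (Nat.Prime.dvd_mul Nat.prime_two).mp
        (hmain ▸ Dvd.intro n rfl) with h | h
      · exact h
      · exact absurd h hTodd
    exact (sig_mod2 (by norm_num) (by norm_num) α).mp h2A
  -- geometric identity for 5
  have hgeo5 : 4 * sig (5^α) + 1 = 5^(α+1) := by
    have h := sig_geom 4 α (by norm_num)
    norm_num at h
    exact h
  -- 3 divides sig (5^α)
  have h3A : 3 ∣ sig (5^α) := by
    obtain ⟨m, hm⟩ := hαodd
    rw [← ZMod.natCast_eq_zero_iff]
    have hc : ((4 * sig (5^α) + 1 : ℕ) : ZMod 3) = ((5^(α+1) : ℕ) : ZMod 3) := by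
      rw [hgeo5]
    push_cast at hc
    rw [hm, pow_mul] at hc
    have h25 : ((5 : ZMod 3))^2 = 1 := by decide
    rw [h25, one_pow] at hc
    have h4 : (4 : ZMod 3) = 1 := by decide
    rw [h4, one_mul] at hc
    simpa using hc
  -- membership extractor
  have key : ∀ r : ℕ, r.Prime → r ≠ 2 → r ≠ 5 → r ∣ 2 * n → r ∈ P := by
    intro r hr hr2 hr5 hrn
    have hrn' : r ∣ n :=
      (Nat.Coprime.dvd_of_dvd_mul_left
        ((Nat.Prime.coprime_iff_not_dvd hr).mpr
          (fun h => hr2 ((Nat.prime_dvd_prime_iff_eq hr Nat.prime_two).mp h))) hrn)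
    rw [hn] at hrn'
    rcases (Nat.Prime.dvd_mul hr).mp hrn' with h | h
    · exact absurd ((Nat.prime_dvd_prime_iff_eq hr (by norm_num)).mp
        (hr.dvd_of_dvd_pow h)) hr5
    · exact Nat.mem_primeFactors.mpr ⟨hr, hr.dvd_of_dvd_pow h, hMne⟩
  -- 3 ∈ P
  have h3P : (3 : ℕ) ∈ P :=
    key 3 (by norm_num) (by norm_num) (by norm_num) (hmain ▸ (h3A.mul_right _))
  -- 5 ∣ T
  have h5T : 5 ∣ ∏ q ∈ P, sig (q^(2*β)) := by
    have h5n : (5:ℕ) ∣ 2 * n := by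
      rw [hn]
      exact Dvd.dvd.mul_left ((dvd_pow_self 5 hα.ne').mul_right _) 2
    have h5A : ¬ (5 ∣ sig (5^α)) := by
      intro h
      have hc : ((4 * sig (5^α) + 1 : ℕ) : ZMod 5) = ((5^(α+1) : ℕ) : ZMod 5) := by
        rw [hgeo5]
      push_cast at hc
      rw [(ZMod.natCast_eq_zero_iff _ _).mpr h] at hc
      rw [show ((5:ZMod 5)) = 0 by decide, zero_pow (by omega), mul_zero] at hc
      exact absurd hc (by decide)
    rcases (Nat.Prime.dvd_mul (by norm_num)).mp (hmain ▸ h5n) with h | h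
    · exact absurd h h5A
    · exact h
  -- 5 ∣ 2β + 1
  have h5β : 5 ∣ (2*β + 1) := by
    obtain ⟨q, hqP, hq5⟩ :=
      (Nat.prime_iff.mp (by norm_num : (5:ℕ).Prime)).exists_mem_finset_dvd h5T
    obtain ⟨hqp, hqM⟩ := hPmem q hqP
    have hq5' : ¬ (5 ∣ q) := fun h =>
      h5M (((Nat.prime_dvd_prime_iff_eq (by norm_num) hqp).mp h) ▸ hqM)
    have hx0 : (q : ZMod 5) ≠ 0 := fun h =>
      hq5' ((ZMod.natCast_eq_zero_iff _ _).mp h)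
    by_cases hx1 : (q : ZMod 5) = 1
    · have := sig_cast_of_one hqp hx1 (2*β)
      rw [(ZMod.natCast_eq_zero_iff _ _).mpr hq5] at this
      exact (ZMod.natCast_eq_zero_iff _ _).mp this.symm
    · exfalso
      haveI : Fact (Nat.Prime 5) := ⟨by norm_num⟩
      have hsum : (∑ i ∈ Finset.range (2*β+1), (q : ZMod 5)^i) = 0 := by
        rw [← sig_pp_cast hqp]
        exact (ZMod.natCast_eq_zero_iff _ _).mpr hq5
      rw [geom_sum_eq hx1] at hsum
      have hpow : (q : ZMod 5)^(2*β+1) = 1 := by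
        rcases div_eq_zero_iff.mp hsum with h | h
        · exact sub_eq_zero.mp (by linear_combination h)
        · exact absurd h (sub_ne_zero.mpr hx1)
      have h4 : (q : ZMod 5)^4 = 1 := by
        have := ZMod.pow_card_sub_one_eq_one hx0
        norm_num at this
        exact this
      have hgcd := pow_gcd_eq_one.mpr ⟨hpow, h4⟩
      have : Nat.gcd (2*β+1) 4 = 1 := by
        have h2 : Nat.Coprime (2*β+1) 2 :=
          ((Nat.prime_two.coprime_iff_not_dvd).mpr (by omega)).symm
        have := h2.pow_right 2
        norm_num at this
        exact this
      rw [this, pow_one] at hgcd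
      exact hx1 hgcd
  obtain ⟨k, hk⟩ := h5β
  -- 11 ∣ sig (3^(2β))
  have hgeo3 : 2 * sig (3^(2*β)) + 1 = 3^(2*β+1) := by
    have h := sig_geom 2 (2*β) (by norm_num)
    norm_num at h
    exact h
  have h11s3 : 11 ∣ sig (3^(2*β)) := by
    have hg : 2 * sig (3^(2*β)) + 1 = 243^k := by
      rw [hgeo3, hk, pow_mul]
      norm_num
    have hpow : (243:ℕ)^k ≡ 1 [MOD 11] := by
      simpa using Nat.ModEq.pow k (show (243:ℕ) ≡ 1 [MOD 11] by decide)
    have hmod : 2 * sig (3^(2*β)) + 1 ≡ 1 [MOD 11] := hg ▸ hpow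
    have hdvd : (11:ℕ) ∣ (2 * sig (3^(2*β)) + 1) - 1 :=
      (Nat.modEq_iff_dvd' (by omega)).mp hmod.symm
    have h2s : (11:ℕ) ∣ 2 * sig (3^(2*β)) := by simpa using hdvd
    exact Nat.Coprime.dvd_of_dvd_mul_left (by decide) h2s
  have h11P : (11:ℕ) ∈ P := by
    refine key 11 (by norm_num) (by norm_num) (by norm_num) ?_
    exact (h11s3.trans
      (Finset.dvd_prod_of_mem (fun q => sig (q^(2*β))) h3P)).trans
      ⟨sig (5^α), by rw [← hmain]; ring⟩
  -- 3221 ∣ sig (11^(2β))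
  have hgeo11 : 10 * sig (11^(2*β)) + 1 = 11^(2*β+1) := by
    have h := sig_geom 10 (2*β) (by norm_num)
    norm_num at h
    exact h
  have h3221s11 : 3221 ∣ sig (11^(2*β)) := by
    have hg : 10 * sig (11^(2*β)) + 1 = 161051^k := by
      rw [hgeo11, hk, pow_mul]
      norm_num
    have hpow : (161051:ℕ)^k ≡ 1 [MOD 3221] := by
      simpa using Nat.ModEq.pow k (show (161051:ℕ) ≡ 1 [MOD 3221] by decide)
    have hmod : 10 * sig (11^(2*β)) + 1 ≡ 1 [MOD 3221] := hg ▸ hpow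
    have hdvd : (3221:ℕ) ∣ (10 * sig (11^(2*β)) + 1) - 1 :=
      (Nat.modEq_iff_dvd' (by omega)).mp hmod.symm
    have h2s : (3221:ℕ) ∣ 10 * sig (11^(2*β)) := by simpa using hdvd
    exact Nat.Coprime.dvd_of_dvd_mul_left (by decide) h2s
  have h3221P : (3221:ℕ) ∈ P := by
    refine key 3221 (by norm_num) (by norm_num) (by norm_num) ?_
    exact (h3221s11.trans
      (Finset.dvd_prod_of_mem (fun q => sig (q^(2*β))) h11P)).trans
      ⟨sig (5^α), by rw [← hmain]; ring⟩
  -- 5 divides sig(q^(2β)) for q ≡ 1 mod 5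
  have h5s : ∀ p : ℕ, p.Prime → (p : ZMod 5) = 1 → 5 ∣ sig (p^(2*β)) := by
    intro p hp h1
    have hcast := sig_cast_of_one hp h1 (2*β)
    rw [← ZMod.natCast_eq_zero_iff, hcast,
      ZMod.natCast_eq_zero_iff]
    exact ⟨k, hk⟩
  have h5s11 := h5s 11 (by norm_num) (by decide)
  have h5s3221 := h5s 3221 (by norm_num) (by decide)
  -- 25 divides T, hence α ≥ 2
  have h2subP : ({11, 3221} : Finset ℕ) ⊆ P := by
    intro x hx
    rcases Finset.mem_insert.mp hx with rfl | hx
    · exact h11P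
    · rw [Finset.mem_singleton.mp hx]; exact h3221P
  have h25T : 25 ∣ ∏ q ∈ P, sig (q^(2*β)) := by
    have hd : 25 ∣ ∏ q ∈ ({11, 3221} : Finset ℕ), sig (q^(2*β)) := by
      rw [Finset.prod_insert (by norm_num), Finset.prod_singleton,
        show (25:ℕ) = 5 * 5 by norm_num]
      exact mul_dvd_mul h5s11 h5s3221
    exact hd.trans (Finset.prod_dvd_prod_of_subset _ _ _ h2subP)
  have hα2 : 2 ≤ α := by
    have h25n : (25:ℕ) ∣ n := Nat.Coprime.dvd_of_dvd_mul_left (by decide)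
      (hmain ▸ h25T.mul_left (sig (5^α)))
    rw [hn] at h25n
    have hcop25 : Nat.Coprime 25 (M^(2*β)) := by
      have h := hcop5M.pow 2 (2*β)
      norm_num at h
      exact h
    have h255 : (5:ℕ)^2 ∣ 5^α := by
      rw [show (5:ℕ)^2 = 25 by norm_num]
      exact Nat.Coprime.dvd_of_dvd_mul_right hcop25 h25n
    exact (Nat.pow_dvd_pow_iff_le_right (by norm_num)).mp h255
  -- numeric lower bounds
  have hβ2 : 4 ≤ 2*β := by clear * - hk hβ; omega
  have hx5 : (25:ℕ) ≤ 5^α := by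
    calc (25:ℕ) = 5^2 := by norm_num
      _ ≤ 5^α := Nat.pow_le_pow_right (by norm_num) hα2
  have hx3 : (81:ℕ) ≤ 3^(2*β) := by
    calc (81:ℕ) = 3^4 := by norm_num
      _ ≤ 3^(2*β) := Nat.pow_le_pow_right (by norm_num) hβ2
  have hx11 : (14641:ℕ) ≤ 11^(2*β) := by
    calc (14641:ℕ) = 11^4 := by norm_num
      _ ≤ 11^(2*β) := Nat.pow_le_pow_right (by norm_num) hβ2
  rw [pow_succ] at hgeo5 hgeo3 hgeo11
  have b5 : 31 * 5^α ≤ 25 * sig (5^α) := by clear * - hgeo5 hx5; omega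
  have b3 : 121 * 3^(2*β) ≤ 81 * sig (3^(2*β)) := by clear * - hgeo3 hx3; omega
  have b11 : 16105 * 11^(2*β) ≤ 14641 * sig (11^(2*β)) := by clear * - hgeo11 hx11; omega
  -- split products
  have h11P' : (11:ℕ) ∈ P.erase 3 := Finset.mem_erase.mpr ⟨by norm_num, h11P⟩
  set Q := (P.erase 3).erase 11 with hQ
  have hTsplit : ∏ q ∈ P, sig (q^(2*β))
      = sig (3^(2*β)) * (sig (11^(2*β)) * ∏ q ∈ Q, sig (q^(2*β))) := by
    rw [← Finset.mul_prod_erase P _ h3P, ← Finset.mul_prod_erase (P.erase 3) _ h11P']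
  have hMsplit : ∏ q ∈ P, q^(2*β) = 3^(2*β) * (11^(2*β) * ∏ q ∈ Q, q^(2*β)) := by
    rw [← Finset.mul_prod_erase P (fun q => q^(2*β)) h3P,
      ← Finset.mul_prod_erase (P.erase 3) (fun q => q^(2*β)) h11P']
  have hQmem : ∀ q ∈ Q, q.Prime := fun q hq =>
    (hPmem q (Finset.mem_of_mem_erase (Finset.mem_of_mem_erase hq))).1
  have hGle : ∏ q ∈ Q, q^(2*β) ≤ ∏ q ∈ Q, sig (q^(2*β)) :=
    Finset.prod_le_prod' (fun q hq => sig_ge (pow_ne_zero _ (hQmem q hq).pos.ne'))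
  have hGpos : 0 < ∏ q ∈ Q, q^(2*β) :=
    Finset.prod_pos (fun q hq => pow_pos (hQmem q hq).pos _)
  have hneq : n = 5^α * (3^(2*β) * (11^(2*β) * ∏ q ∈ Q, q^(2*β))) := by
    have hMp : M^(2*β) = ∏ q ∈ P, q^(2*β) := by rw [← hMprod, Finset.prod_pow]
    rw [hn, hMp, hMsplit]
  have hEq : sig (5^α) * (sig (3^(2*β)) * (sig (11^(2*β)) * ∏ q ∈ Q, sig (q^(2*β))))
      = 2 * (5^α * (3^(2*β) * (11^(2*β) * ∏ q ∈ Q, q^(2*β)))) := by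
    rw [← hTsplit, hmain, hneq]
  have hle : sig (5^α) * (sig (3^(2*β)) * sig (11^(2*β))) * (∏ q ∈ Q, q^(2*β))
      ≤ 2 * (5^α * (3^(2*β) * 11^(2*β))) * (∏ q ∈ Q, q^(2*β)) := by
    calc sig (5^α) * (sig (3^(2*β)) * sig (11^(2*β))) * (∏ q ∈ Q, q^(2*β))
        = sig (5^α) * (sig (3^(2*β)) * (sig (11^(2*β)) * ∏ q ∈ Q, q^(2*β))) := by ring
      _ ≤ sig (5^α) * (sig (3^(2*β)) * (sig (11^(2*β)) * ∏ q ∈ Q, sig (q^(2*β)))) := by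
          gcongr
      _ = 2 * (5^α * (3^(2*β) * (11^(2*β) * ∏ q ∈ Q, q^(2*β)))) := hEq
      _ = 2 * (5^α * (3^(2*β) * 11^(2*β))) * (∏ q ∈ Q, q^(2*β)) := by ring
  have hfin : sig (5^α) * (sig (3^(2*β)) * sig (11^(2*β)))
      ≤ 2 * (5^α * (3^(2*β) * 11^(2*β))) :=
    Nat.le_of_mul_le_mul_right hle hGpos
  have hbig : 31 * 5^α * (121 * 3^(2*β) * (16105 * 11^(2*β)))
      ≤ 25 * sig (5^α) * (81 * sig (3^(2*β)) * (14641 * sig (11^(2*β)))) :=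
    Nat.mul_le_mul b5 (Nat.mul_le_mul b3 b11)
  have hXpos : 0 < 5^α * (3^(2*β) * 11^(2*β)) := by positivity
  have h1 : 60409855 * (5^α * (3^(2*β) * 11^(2*β)))
      ≤ 29648025 * (sig (5^α) * (sig (3^(2*β)) * sig (11^(2*β)))) := by
    calc 60409855 * (5^α * (3^(2*β) * 11^(2*β)))
        = 31 * 5^α * (121 * 3^(2*β) * (16105 * 11^(2*β))) := by ring
      _ ≤ 25 * sig (5^α) * (81 * sig (3^(2*β)) * (14641 * sig (11^(2*β)))) := hbig
      _ = 29648025 * (sig (5^α) * (sig (3^(2*β)) * sig (11^(2*β)))) := by ring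
  have h2 : 29648025 * (sig (5^α) * (sig (3^(2*β)) * sig (11^(2*β))))
      ≤ 59296050 * (5^α * (3^(2*β) * 11^(2*β))) := by
    calc 29648025 * (sig (5^α) * (sig (3^(2*β)) * sig (11^(2*β))))
        ≤ 29648025 * (2 * (5^α * (3^(2*β) * 11^(2*β)))) := Nat.mul_le_mul_left _ hfin
      _ = 59296050 * (5^α * (3^(2*β) * 11^(2*β))) := by ring
  have h3 : (5^α * (3^(2*β) * 11^(2*β))) * 60409855
      ≤ (5^α * (3^(2*β) * 11^(2*β))) * 59296050 := by
    calc (5^α * (3^(2*β) * 11^(2*β))) * 60409855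
        = 60409855 * (5^α * (3^(2*β) * 11^(2*β))) := by ring
      _ ≤ 59296050 * (5^α * (3^(2*β) * 11^(2*β))) := le_trans h1 h2
      _ = (5^α * (3^(2*β) * 11^(2*β))) * 59296050 := by ring
  have hfalse := Nat.le_of_mul_le_mul_left h3 hXpos
  clear * - hfalse
  omega
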